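/- arXiv:1601.02538 — 3 statements merged into one kernel-verified Lean document; each statement's English description precedes it below -/
import Mathlib

section
/- Let n ≥ 1, let U ⊆ ℝⁿ be open, and let v : ℝⁿ → ℝ be three times continuously differentiable on U. Then at every point of U, S₂(D²v) = (1/2)·div( S²_{ij}(D²v)·∂_j v ), i.e. S₂(D²v) = (1/2)·∑_{i=1}^{n} ∂_i ( ∑_{j=1}^{n} ((Δv)·δ_{ij} − v_{ij})·v_j ), where S₂(D²v) = ((Δv)² − ∑_{i,j} v_{ij}²)/2. -/
open scoped Topology

/-- Partial derivative `∂_i f` of a function on `ℝⁿ`. -/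
noncomputable def pd {n : ℕ} (i : Fin n) (f : (Fin n → ℝ) → ℝ) (x : Fin n → ℝ) : ℝ :=
  fderiv ℝ f x (Pi.single i 1)

section lemmas
variable {n : ℕ}

lemma pd_congr {f g : (Fin n → ℝ) → ℝ} {x : Fin n → ℝ} (h : f =ᶠ[𝓝 x] g) (i : Fin n) :
    pd i f x = pd i g x := by
  unfold pd; rw [h.fderiv_eq]

lemma pd_sub {f g : (Fin n → ℝ) → ℝ} {x : Fin n → ℝ} (hf : DifferentiableAt ℝ f x)
    (hg : DifferentiableAt ℝ g x) (i : Fin n) :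
    pd i (fun y => f y - g y) x = pd i f x - pd i g x := by
  unfold pd; rw [fderiv_fun_sub hf hg]; rfl

lemma pd_mul {f g : (Fin n → ℝ) → ℝ} {x : Fin n → ℝ} (hf : DifferentiableAt ℝ f x)
    (hg : DifferentiableAt ℝ g x) (i : Fin n) :
    pd i (fun y => f y * g y) x = pd i f x * g x + f x * pd i g x := by
  unfold pd; rw [fderiv_fun_mul hf hg]
  simp only [ContinuousLinearMap.add_apply, ContinuousLinearMap.smul_apply, smul_eq_mul]
  ring

lemma pd_sum {ι : Type*} (s : Finset ι) {f : ι → (Fin n → ℝ) → ℝ} {x : Fin n → ℝ}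
    (hf : ∀ j ∈ s, DifferentiableAt ℝ (f j) x) (i : Fin n) :
    pd i (fun y => ∑ j ∈ s, f j y) x = ∑ j ∈ s, pd i (f j) x := by
  unfold pd; rw [fderiv_fun_sum hf]; simp

-- pd of pd as second fderiv
lemma pd_pd {f : (Fin n → ℝ) → ℝ} {x : Fin n → ℝ}
    (hf : DifferentiableAt ℝ (fun y => fderiv ℝ f y) x) (i j : Fin n) :
    pd j (pd i f) x = fderiv ℝ (fderiv ℝ f) x (Pi.single j 1) (Pi.single i 1) := by
  unfold pd
  rw [fderiv_clm_apply hf (differentiableAt_const (Pi.single i (1:ℝ)))]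
  simp

lemma contDiffOn_pd {U : Set (Fin n → ℝ)} (hU : IsOpen U) {f : (Fin n → ℝ) → ℝ} {m : ℕ}
    (hf : ContDiffOn ℝ (m + 1) f U) (i : Fin n) :
    ContDiffOn ℝ m (pd i f) U := by
  have h : ContDiffOn ℝ m (fderiv ℝ f) U := hf.fderiv_of_isOpen hU (by norm_cast)
  exact h.clm_apply contDiffOn_const

end lemmas
/-- Laplacian `Δf = ∑ᵢ ∂ᵢᵢ f`. -/
noncomputable def lap {n : ℕ} (f : (Fin n → ℝ) → ℝ) (x : Fin n → ℝ) : ℝ :=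
  ∑ i, pd i (pd i f) x

/-- `S²_{ij}(D²v) = (Δv)·δ_{ij} − ∂_{ij}v`. -/
noncomputable def S2ij {n : ℕ} (v : (Fin n → ℝ) → ℝ) (i j : Fin n) (x : Fin n → ℝ) : ℝ :=
  lap v x * (if i = j then 1 else 0) - pd j (pd i v) x

/-- `S₂(D²v) = ((Δv)² − ∑_{i,j} v_{ij}²)/2`, the sum of the principal 2×2 minors
of the Hessian. -/
noncomputable def S2H {n : ℕ} (v : (Fin n → ℝ) → ℝ) (x : Fin n → ℝ) : ℝ :=
  ((lap v x) ^ 2 - ∑ i, ∑ j, (pd j (pd i v) x) ^ 2) / 2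
/-- `S₂(D²v) = (1/2)·div(S²_{ij}(D²v)·∂ⱼv)` on `U`. -/
theorem stmt_3 (n : ℕ) (hn : 1 ≤ n) (U : Set (Fin n → ℝ)) (hU : IsOpen U)
    (v : (Fin n → ℝ) → ℝ) (hv : ContDiffOn ℝ 3 v U)
    (x : Fin n → ℝ) (hx : x ∈ U) :
    S2H v x = (1 / 2) * ∑ i, pd i (fun y => ∑ j, S2ij v i j y * pd j v y) x := by
  have hmem : U ∈ 𝓝 x := hU.mem_nhds hx
  have hv2 : ∀ i : Fin n, ContDiffOn ℝ 2 (pd i v) U := fun i => by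
    have h := contDiffOn_pd (m := 2) hU (by exact_mod_cast hv) i
    exact_mod_cast h
  have hv1 : ∀ i j : Fin n, ContDiffOn ℝ 1 (pd j (pd i v)) U := fun i j => by
    have h := contDiffOn_pd (m := 1) hU (by exact_mod_cast hv2 i) j
    exact_mod_cast h
  have dv : ∀ x' ∈ U, ∀ i : Fin n, DifferentiableAt ℝ (pd i v) x' := fun x' hx' i =>
    ((hv2 i).contDiffAt (hU.mem_nhds hx')).differentiableAt two_ne_zero
  have dvv : ∀ i j : Fin n, DifferentiableAt ℝ (pd j (pd i v)) x := fun i j =>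
    ((hv1 i j).contDiffAt hmem).differentiableAt one_ne_zero
  have dlap : DifferentiableAt ℝ (lap v) x := by
    have h : (lap v) = fun y => ∑ i, pd i (pd i v) y := rfl
    rw [h]
    exact DifferentiableAt.fun_sum fun i _ => dvv i i
  have dF : ∀ x' ∈ U, DifferentiableAt ℝ (fderiv ℝ v) x' := fun x' hx' => by
    have h2 : ContDiffOn ℝ 2 (fderiv ℝ v) U :=
      hv.fderiv_of_isOpen hU (by exact_mod_cast (le_refl 3))
    exact (h2.contDiffAt (hU.mem_nhds hx')).differentiableAt two_ne_zero
  have dFk : ∀ k : Fin n, DifferentiableAt ℝ (fderiv ℝ (pd k v)) x := fun k => by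
    have h1 : ContDiffOn ℝ 1 (fderiv ℝ (pd k v)) U :=
      (hv2 k).fderiv_of_isOpen hU (by exact_mod_cast (le_refl 2))
    exact (h1.contDiffAt hmem).differentiableAt one_ne_zero
  have hsym : ∀ x' ∈ U, ∀ i j : Fin n, pd j (pd i v) x' = pd i (pd j v) x' := by
    intro x' hx' i j
    have hs : IsSymmSndFDerivAt ℝ v x' :=
      (hv.contDiffAt (hU.mem_nhds hx')).isSymmSndFDerivAt (by rw [minSmoothness_of_isRCLikeNormedField]; exact_mod_cast Nat.le_succ 2)
    rw [pd_pd (dF x' hx') i j, pd_pd (dF x' hx') j i, hs]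
  have hsymA : ∀ a b k : Fin n, pd a (pd b (pd k v)) x = pd b (pd a (pd k v)) x := by
    intro a b k
    have hs : IsSymmSndFDerivAt ℝ (pd k v) x :=
      ((hv2 k).contDiffAt hmem).isSymmSndFDerivAt (by simp)
    rw [pd_pd (dFk k) b a, pd_pd (dFk k) a b, hs]
  have hG : ∀ i : Fin n, (fun y => ∑ j, S2ij v i j y * pd j v y)
      = fun y => lap v y * pd i v y - ∑ j, pd j (pd i v) y * pd j v y := by
    intro i; funext y
    simp only [S2ij, sub_mul, Finset.sum_sub_distrib]
    congr 1
    simp [mul_ite, ite_mul]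
  have main : ∀ i : Fin n, pd i (fun y => ∑ j, S2ij v i j y * pd j v y) x
      = (∑ j, pd i (pd j (pd j v)) x) * pd i v x + lap v x * pd i (pd i v) x
        - ∑ j, (pd i (pd j (pd i v)) x * pd j v x + pd j (pd i v) x * pd i (pd j v) x) := by
    intro i
    rw [hG i]
    have d1 : DifferentiableAt ℝ (fun y => lap v y * pd i v y) x := dlap.mul (dv x hx i)
    have d2 : DifferentiableAt ℝ (fun y => ∑ j, pd j (pd i v) y * pd j v y) x :=
      DifferentiableAt.fun_sum fun j _ => (dvv i j).mul (dv x hx j)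
    have hlapd : pd i (lap v) x = ∑ j, pd i (pd j (pd j v)) x := by
      have h : lap v = fun y => ∑ j, pd j (pd j v) y := rfl
      rw [h, pd_sum Finset.univ (fun j _ => dvv j j) i]
    rw [pd_sub d1 d2 i, pd_mul dlap (dv x hx i) i, hlapd,
        pd_sum (f := fun j y => pd j (pd i v) y * pd j v y) Finset.univ (fun j _ => (dvv i j).mul (dv x hx j)) i]
    congr 1
    refine Finset.sum_congr rfl fun j _ => ?_
    rw [pd_mul (dvv i j) (dv x hx j) i]
  simp only [main]
  have split : ∀ i : Fin n,
      ∑ j, (pd i (pd j (pd i v)) x * pd j v x + pd j (pd i v) x * pd i (pd j v) x)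
      = (∑ j, pd i (pd j (pd i v)) x * pd j v x)
        + ∑ j, pd j (pd i v) x * pd i (pd j v) x := fun i => Finset.sum_add_distrib
  simp only [split]
  have e1 : ∑ i : Fin n, ∑ j, pd i (pd j (pd i v)) x * pd j v x
      = ∑ i : Fin n, (∑ j, pd i (pd j (pd j v)) x) * pd i v x := by
    rw [Finset.sum_comm]
    refine Finset.sum_congr rfl fun i _ => ?_
    rw [Finset.sum_mul]
    refine Finset.sum_congr rfl fun j _ => ?_
    rw [hsymA j i j]
  have e3 : ∀ i j : Fin n, pd j (pd i v) x * pd i (pd j v) x = (pd j (pd i v) x) ^ 2 :=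
    fun i j => by rw [hsym x hx i j]; ring
  simp only [e3]
  rw [Finset.sum_sub_distrib, Finset.sum_add_distrib, Finset.sum_add_distrib, e1,
      ← Finset.mul_sum]
  have hL : ∑ i : Fin n, pd i (pd i v) x = lap v x := rfl
  rw [hL]
  simp only [S2H]
  ring
end

section
/- Let n ≥ 1, γ ∈ ℝ, let U ⊆ ℝⁿ be open, and let v : ℝⁿ → ℝ be three times continuously differentiable and strictly positive on U. Then the identity (identityB) holds pointwise on U: v^{γ−1}·∑_{i,j} S²_{ij}(D²v)·v_i·v_j = (3/2)·v^{γ−1}·|Dv|²·Δv + ((γ−1)/2)·v^{γ−2}·|Dv|⁴ − (1/2)·div( v^{γ−1}·|Dv|²·Dv ). -/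
/-- `|Df|² = ∑ᵢ (∂ᵢf)²`. -/
noncomputable def gradSq {n : ℕ} (f : (Fin n → ℝ) → ℝ) (x : Fin n → ℝ) : ℝ :=
  ∑ i, (pd i f x) ^ 2

/-- Identity (identityB):
`v^{γ−1}·S²_{ij}(D²v)·vᵢ·vⱼ = (3/2)·v^{γ−1}·|Dv|²·Δv + ((γ−1)/2)·v^{γ−2}·|Dv|⁴
  − (1/2)·div(v^{γ−1}·|Dv|²·Dv)` on `U`. -/
theorem stmt_5 (n : ℕ) (hn : 1 ≤ n) (γ : ℝ) (U : Set (Fin n → ℝ)) (hU : IsOpen U)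
    (v : (Fin n → ℝ) → ℝ) (hv : ContDiffOn ℝ 3 v U) (hpos : ∀ x ∈ U, 0 < v x)
    (x : Fin n → ℝ) (hx : x ∈ U) :
    v x ^ (γ - 1) * ∑ i, ∑ j, S2ij v i j x * pd i v x * pd j v x
      = (3 / 2) * v x ^ (γ - 1) * gradSq v x * lap v x
        + ((γ - 1) / 2) * v x ^ (γ - 2) * (gradSq v x) ^ 2
        - (1 / 2) * ∑ j, pd j (fun y => v y ^ (γ - 1) * gradSq v y * pd j v y) x := by
  have hxU : U ∈ nhds x := hU.mem_nhds hx
  have hv3 : ContDiffAt ℝ 3 v x := hv.contDiffAt hxU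
  have hv1 : DifferentiableAt ℝ v x := hv3.differentiableAt (by norm_num)
  have hpd2 : ∀ i : Fin n, ContDiffAt ℝ 2 (pd i v) x := fun i =>
    (hv3.fderiv_right (by norm_num)).clm_apply contDiffAt_const
  have hpd1 : ∀ i : Fin n, DifferentiableAt ℝ (pd i v) x := fun i =>
    (hpd2 i).differentiableAt (by norm_num)
  have hvpos := hpos x hx
  have hrpow : HasFDerivAt (fun y => v y ^ (γ - 1))
      (((γ - 1) * v x ^ (γ - 2)) • fderiv ℝ v x) x := by
    have h := hv1.hasFDerivAt.rpow_const (p := γ - 1) (Or.inl hvpos.ne')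
    have e : γ - 1 - 1 = γ - 2 := by ring
    rwa [e] at h
  have hsq : ∀ i : Fin n, HasFDerivAt (fun y => (pd i v y) ^ 2)
      ((2 * pd i v x) • fderiv ℝ (pd i v) x) x := by
    intro i
    have h := (hpd1 i).hasFDerivAt.mul (hpd1 i).hasFDerivAt
    have e : pd i v x • fderiv ℝ (pd i v) x + pd i v x • fderiv ℝ (pd i v) x
        = (2 * pd i v x) • fderiv ℝ (pd i v) x := by
      rw [← add_smul, ← two_mul]
    rw [e] at h
    simpa [pow_two, Pi.mul_def] using h
  have hgrad : HasFDerivAt (gradSq v)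
      (∑ i, (2 * pd i v x) • fderiv ℝ (pd i v) x) x := by
    have h : HasFDerivAt (fun y => ∑ i, (pd i v y) ^ 2)
        (∑ i, (2 * pd i v x) • fderiv ℝ (pd i v) x) x :=
      HasFDerivAt.fun_sum fun i _ => hsq i
    exact h.congr_of_eventuallyEq (by filter_upwards with y; rfl)
  have hF : ∀ j : Fin n, HasFDerivAt (fun y => v y ^ (γ - 1) * gradSq v y * pd j v y)
      ((v x ^ (γ - 1) * gradSq v x) • fderiv ℝ (pd j v) x
        + pd j v x • ((v x ^ (γ - 1)) • (∑ i, (2 * pd i v x) • fderiv ℝ (pd i v) x)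
          + gradSq v x • (((γ - 1) * v x ^ (γ - 2)) • fderiv ℝ v x))) x :=
    fun j => (hrpow.mul hgrad).mul (hpd1 j).hasFDerivAt
  have hpdF : ∀ j : Fin n, pd j (fun y => v y ^ (γ - 1) * gradSq v y * pd j v y) x
      = v x ^ (γ - 1) * gradSq v x * pd j (pd j v) x
        + pd j v x * (v x ^ (γ - 1) * (∑ i, 2 * pd i v x * pd j (pd i v) x)
          + gradSq v x * ((γ - 1) * v x ^ (γ - 2) * pd j v x)) := by
    intro j
    show fderiv ℝ _ x (Pi.single j 1) = _
    rw [(hF j).fderiv]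
    simp only [ContinuousLinearMap.add_apply, ContinuousLinearMap.smul_apply,
      ContinuousLinearMap.sum_apply, smul_eq_mul, Finset.mul_sum]
    have hq : ∀ i : Fin n, fderiv ℝ (pd i v) x (Pi.single j 1) = pd j (pd i v) x := fun i => rfl
    have hp : fderiv ℝ v x (Pi.single j 1) = pd j v x := rfl
    simp only [hq, hp]
  have hG : gradSq v x = ∑ i, pd i v x ^ 2 := rfl
  have hL : lap v x = ∑ i, pd i (pd i v) x := rfl
  have e1 : ∑ i, ∑ j, (lap v x * (if i = j then 1 else 0) - pd j (pd i v) x)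
        * pd i v x * pd j v x
      = lap v x * gradSq v x
        - ∑ i, ∑ j, pd j (pd i v) x * pd i v x * pd j v x := by
    simp only [sub_mul, Finset.sum_sub_distrib]
    congr 1
    rw [hG, Finset.mul_sum]
    apply Finset.sum_congr rfl; intro i _
    simp only [mul_ite, mul_one, mul_zero, ite_mul, zero_mul, Finset.sum_ite_eq,
      Finset.mem_univ, if_true]
    ring
  have s1 : ∑ j, v x ^ (γ - 1) * gradSq v x * pd j (pd j v) x
      = v x ^ (γ - 1) * gradSq v x * lap v x := by
    rw [hL, Finset.mul_sum]
  have s2 : ∑ j, pd j v x * (v x ^ (γ - 1) * ∑ i, 2 * pd i v x * pd j (pd i v) x)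
      = 2 * v x ^ (γ - 1) * ∑ i, ∑ j, pd j (pd i v) x * pd i v x * pd j v x := by
    calc ∑ j, pd j v x * (v x ^ (γ - 1) * ∑ i, 2 * pd i v x * pd j (pd i v) x)
        = ∑ j, ∑ i, 2 * v x ^ (γ - 1) * (pd j (pd i v) x * pd i v x * pd j v x) := by
          apply Finset.sum_congr rfl; intro j _
          rw [Finset.mul_sum, Finset.mul_sum]
          apply Finset.sum_congr rfl; intro i _; ring
      _ = ∑ i, ∑ j, 2 * v x ^ (γ - 1) * (pd j (pd i v) x * pd i v x * pd j v x) :=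
          Finset.sum_comm
      _ = 2 * v x ^ (γ - 1) * ∑ i, ∑ j, pd j (pd i v) x * pd i v x * pd j v x := by
          simp only [Finset.mul_sum]
  have s3 : ∑ j, pd j v x * (gradSq v x * ((γ - 1) * v x ^ (γ - 2) * pd j v x))
      = (γ - 1) * v x ^ (γ - 2) * gradSq v x * gradSq v x := by
    calc ∑ j, pd j v x * (gradSq v x * ((γ - 1) * v x ^ (γ - 2) * pd j v x))
        = ∑ j, (γ - 1) * v x ^ (γ - 2) * gradSq v x * pd j v x ^ 2 := by
          apply Finset.sum_congr rfl; intro j _; ring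
      _ = (γ - 1) * v x ^ (γ - 2) * gradSq v x * ∑ j, pd j v x ^ 2 := by
          rw [Finset.mul_sum]
      _ = (γ - 1) * v x ^ (γ - 2) * gradSq v x * gradSq v x := by rw [← hG]
  simp only [S2ij, hpdF, mul_add, Finset.sum_add_distrib]
  rw [e1, s1, s2, s3]
  ring
end

section
/- Let n ≥ 3, let U ⊆ ℝⁿ be open, and let u : ℝⁿ → ℝ be twice continuously differentiable, strictly positive, and harmonic on U. Set v = u^{−2/(n−2)}. If there is a constant c ∈ ℝ such that D²v(x) = c·Id for all x ∈ U, then |Du| is constant on every level set of u contained in U; that is, for all x, y ∈ U with u(x) = u(y) one has |Du(x)| = |Du(y)|. -/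
/-- If `u > 0` is `C²` and harmonic on `U ⊆ ℝⁿ` (`n ≥ 3`), `v = u^{−2/(n−2)}`, and
`D²v = c·Id` on `U`, then `|Du|` is constant on every level set of `u` in `U`. -/
theorem stmt_15 (n : ℕ) (hn : 3 ≤ n) (U : Set (Fin n → ℝ)) (hU : IsOpen U)
    (u : (Fin n → ℝ) → ℝ) (hu : ContDiffOn ℝ 2 u U) (hpos : ∀ x ∈ U, 0 < u x)
    (hharm : ∀ x ∈ U, lap u x = 0)
    (v : (Fin n → ℝ) → ℝ) (hv : v = fun y => u y ^ (-(2 : ℝ) / ((n : ℝ) - 2)))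
    (c : ℝ)
    (hhess : ∀ x ∈ U, ∀ i j : Fin n,
      pd j (pd i v) x = c * (if i = j then 1 else 0)) :
    ∀ x ∈ U, ∀ y ∈ U, u x = u y →
      Real.sqrt (∑ i, (pd i u x) ^ 2) = Real.sqrt (∑ i, (pd i u y) ^ 2) := by
  set α : ℝ := -(2 : ℝ) / ((n : ℝ) - 2) with hα
  have hn3 : (3 : ℝ) ≤ (n : ℝ) := by exact_mod_cast hn
  have hαneg : α < 0 := by
    apply div_neg_of_neg_of_pos <;> [norm_num; linarith]
  have hαne : α ≠ 0 := ne_of_lt hαneg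
  have hα1ne : α - 1 ≠ 0 := by linarith
  -- differentiability of u at points of U
  have hder : ∀ y ∈ U, HasFDerivAt u (fderiv ℝ u y) y := by
    intro y hy
    exact ((hu.contDiffAt (hU.mem_nhds hy)).differentiableAt (by norm_num)).hasFDerivAt
  -- first derivative of v
  have hfv : ∀ y ∈ U, HasFDerivAt v ((α * u y ^ (α - 1)) • fderiv ℝ u y) y := by
    intro y hy
    rw [hv]
    exact (hder y hy).rpow_const (Or.inl (hpos y hy).ne')
  have hpdv : ∀ (i : Fin n), ∀ y ∈ U,
      pd i v y = α * u y ^ (α - 1) * pd i u y := by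
    intro i y hy
    simp [pd, (hfv y hy).fderiv, mul_assoc]
  -- pd i u is C¹ on U
  have hC1 : ContDiffOn ℝ 1 (fun y => fderiv ℝ u y) U :=
    hu.fderiv_of_isOpen hU (by norm_num)
  have hpdC1 : ∀ i : Fin n, ContDiffOn ℝ 1 (pd i u) U := by
    intro i
    exact (ContinuousLinearMap.apply ℝ ℝ (Pi.single i 1 : Fin n → ℝ)).contDiff.comp_contDiffOn hC1
  have hpdDA : ∀ i : Fin n, ∀ y ∈ U, DifferentiableAt ℝ (pd i u) y := by
    intro i y hy
    exact ((hpdC1 i).contDiffAt (hU.mem_nhds hy)).differentiableAt (by norm_num)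
  -- second derivative diagonal entries of v
  have hsecond : ∀ x ∈ U, ∀ i : Fin n,
      pd i (pd i v) x = α * u x ^ (α - 1) * pd i (pd i u) x
        + pd i u x * (α * ((α - 1) * u x ^ (α - 2) * pd i u x)) := by
    intro x hx i
    have heq : pd i v =ᶠ[nhds x] fun y => α * u y ^ (α - 1) * pd i u y := by
      filter_upwards [hU.mem_nhds hx] with y hy using hpdv i y hy
    have h1 : HasFDerivAt (fun y => α * u y ^ (α - 1))
        (α • (((α - 1) * u x ^ (α - 1 - 1)) • fderiv ℝ u x)) x :=
      ((hder x hx).rpow_const (Or.inl (hpos x hx).ne')).const_mul α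
    have h2 : HasFDerivAt (pd i u) (fderiv ℝ (pd i u) x) x :=
      (hpdDA i x hx).hasFDerivAt
    have hmul : HasFDerivAt (fun y => α * u y ^ (α - 1) * pd i u y) _ x := h1.mul h2
    have : fderiv ℝ (pd i v) x = fderiv ℝ (fun y => α * u y ^ (α - 1) * pd i u y) x :=
      heq.fderiv_eq
    rw [pd, this, hmul.fderiv]
    have : α - 1 - 1 = α - 2 := by ring
    simp [pd, this, mul_assoc, mul_comm, mul_left_comm]
  -- key pointwise identity
  have key : ∀ x ∈ U, α * (α - 1) * u x ^ (α - 2) * (∑ i, (pd i u x) ^ 2)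
      = (n : ℝ) * c := by
    intro x hx
    have htr : ∑ i, pd i (pd i v) x = (n : ℝ) * c := by
      have := fun i : Fin n => hhess x hx i i
      simp only [if_pos rfl, mul_one] at this
      simp [this, mul_comm]
    rw [← htr]
    have : ∑ i, pd i (pd i v) x
        = α * u x ^ (α - 1) * (∑ i, pd i (pd i u) x)
          + α * (α - 1) * u x ^ (α - 2) * (∑ i, (pd i u x) ^ 2) := by
      rw [Finset.mul_sum, Finset.mul_sum, ← Finset.sum_add_distrib]
      refine Finset.sum_congr rfl fun i _ => ?_
      rw [hsecond x hx i]; ring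
    rw [this]
    have hl : ∑ i, pd i (pd i u) x = 0 := hharm x hx
    rw [hl]; ring
  intro x hx y hy hxy
  have kx := key x hx
  have ky := key y hy
  rw [hxy] at kx
  have hA : α * (α - 1) * u y ^ (α - 2) ≠ 0 := by
    have := (hpos y hy)
    have hpow : u y ^ (α - 2) ≠ 0 := (Real.rpow_pos_of_pos this _).ne'
    exact mul_ne_zero (mul_ne_zero hαne hα1ne) hpow
  have : (∑ i, (pd i u x) ^ 2) = ∑ i, (pd i u y) ^ 2 :=
    mul_left_cancel₀ hA (kx.trans ky.symm)
  rw [this]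
end
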